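/- Let 0 < s₀, s₁ < ∞, 0 < p₀, q₀, p₁, q₁ ≤ ∞ and 0 < θ < 1, and define 1/p = (1−θ)/p₀ + θ/p₁, 1/q = (1−θ)/q₀ + θ/q₁, s = (1−θ)s₀ + θs₁. Then the Calderón product satisfies (I^{s₀}_{p₀,q₀}(X))^{1−θ}(I^{s₁}_{p₁,q₁}(X))^{θ} = I^s_{p,q}(X) with equivalent quasinorms. -/

import Mathlib

open MeasureTheory Metric Filter ENNReal NNReal

noncomputable section

/-- ℓ^p-type sum with weights, with the obvious modification (sup) when `p = ∞`. -/
def sumPartG {ι : Type*} (p : ℝ≥0∞) (w : ι → ℝ≥0∞) (f : ι → ℝ≥0∞) : ℝ≥0∞ :=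
  if p = ∞ then ⨆ i, f i else (∑' i, w i * f i ^ p.toReal) ^ (1 / p.toReal)

/-- The ball associated to a vertex `x` of the hyperbolic filling. -/
def vBall {Z X : Type*} [MetricSpace Z] (ξ : X → Z) (lvl : X → ℤ) (x : X) : Set Z :=
  Metric.ball (ξ x) ((2:ℝ) ^ (-(lvl x)))

/-- The sequence-space quasinorm of `I^s_{p,q}(X)`, for `g : X → ℝ≥0∞`. -/
def seqNorm {Z X : Type*} [MetricSpace Z] [MeasurableSpace Z] (μ : Measure Z)
    (ξ : X → Z) (lvl : X → ℤ) (s : ℝ) (p q : ℝ≥0∞) (g : X → ℝ≥0∞) : ℝ≥0∞ :=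
  sumPartG q (fun _ : ℤ => 1)
    (fun k => (2 : ℝ≥0∞) ^ ((k : ℝ) * s) *
      sumPartG p (fun x : {x : X // lvl x = k} => μ (vBall ξ lvl x.1)) (fun x => g x.1))

/-- The edge relation of the hyperbolic filling graph. -/
def edgeRel {Z X : Type*} [MetricSpace Z] (ξ : X → Z) (lvl : X → ℤ) (x y : X) : Prop :=
  x ≠ y ∧ |lvl x - lvl y| ≤ 1 ∧ (vBall ξ lvl x ∩ vBall ξ lvl y).Nonempty

/-- The magnitude `|du|` of the discrete derivative of `u : X → ℂ`. -/
def eDu {Z X : Type*} [MetricSpace Z] (ξ : X → Z) (lvl : X → ℤ) (u : X → ℂ) (x : X) : ℝ≥0∞ :=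
  (∑' y : {y : X // edgeRel ξ lvl x y}, (‖u y.1 - u x‖₊ : ℝ≥0∞) ^ (2:ℝ)) ^ ((1:ℝ)/2)

/-- The Poisson extension of `f`. -/
def poisson {Z X : Type*} [MetricSpace Z] [MeasurableSpace Z] (μ : Measure Z)
    (ξ : X → Z) (lvl : X → ℤ) (f : Z → ℂ) (x : X) : ℂ :=
  ⨍ z in vBall ξ lvl x, f z ∂μ

/-- The discrete convolution `T_n u = ∑_{|x| = n} u(x) ψ_x`. -/
def discConv {Z X : Type*} (lvl : X → ℤ) (ψ : X → Z → ℝ) (u : X → ℂ) (n : ℤ) (z : Z) : ℂ :=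
  ∑' x : {x : X // lvl x = n}, (ψ x.1 z : ℂ) * u x.1


/-- The Calderón product quasinorm of `I^{s₀}_{p₀,q₀}(X)` and `I^{s₁}_{p₁,q₁}(X)`. -/
def calderonNorm {Z X : Type*} [MetricSpace Z] [MeasurableSpace Z] (μ : Measure Z)
    (ξ : X → Z) (lvl : X → ℤ) (s₀ : ℝ) (p₀ q₀ : ℝ≥0∞) (s₁ : ℝ) (p₁ q₁ : ℝ≥0∞) (θ : ℝ)
    (u : X → ℂ) : ℝ≥0∞ :=
  ⨅ lam : {lam : ℝ≥0∞ // ∃ u₀ u₁ : X → ℂ,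
      seqNorm μ ξ lvl s₀ p₀ q₀ (fun x => (‖u₀ x‖₊ : ℝ≥0∞)) ≤ 1 ∧
      seqNorm μ ξ lvl s₁ p₁ q₁ (fun x => (‖u₁ x‖₊ : ℝ≥0∞)) ≤ 1 ∧
      ∀ x, (‖u x‖₊ : ℝ≥0∞) ≤ lam * (‖u₀ x‖₊ : ℝ≥0∞) ^ (1 - θ) * (‖u₁ x‖₊ : ℝ≥0∞) ^ θ},
    lam.1


namespace S18

lemma toReal_pos2 {p : ℝ≥0∞} (h0 : p ≠ 0) (ht : p ≠ ∞) : 0 < p.toReal :=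
  ENNReal.toReal_pos h0 ht

lemma rpow_rpow_inv (x : ℝ≥0∞) {t : ℝ} (ht : t ≠ 0) : (x ^ t) ^ (1/t) = x := by
  rw [← ENNReal.rpow_mul, mul_one_div, div_self ht, ENNReal.rpow_one]

lemma rpow_inv_rpow (x : ℝ≥0∞) {t : ℝ} (ht : t ≠ 0) : (x ^ (1/t)) ^ t = x := by
  rw [← ENNReal.rpow_mul, one_div_mul_cancel ht, ENNReal.rpow_one]

lemma rpow_ne_top'' {x : ℝ≥0∞} (h0 : x ≠ 0) (ht : x ≠ ∞) (r : ℝ) : x ^ r ≠ ∞ := by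
  lift x to ℝ≥0 using ht
  rw [← ENNReal.coe_rpow_of_ne_zero (by exact_mod_cast h0)]
  exact ENNReal.coe_ne_top

lemma two_rpow_ne_top (r : ℝ) : (2:ℝ≥0∞) ^ r ≠ ∞ :=
  rpow_ne_top'' (by norm_num) (by simp) r

lemma two_rpow_ne_zero (r : ℝ) : (2:ℝ≥0∞) ^ r ≠ 0 :=
  (ENNReal.rpow_pos (by norm_num) (by simp)).ne'

lemma two_rpow_add (r t : ℝ) : (2:ℝ≥0∞) ^ (r + t) = 2 ^ r * 2 ^ t :=
  ENNReal.rpow_add r t (by norm_num) (by simp)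

lemma prod5_pow (b1 b2 b3 b4 b5 : ℝ≥0∞) (u1 u2 u3 u4 u5 : ℝ) {t : ℝ} (ht : 0 ≤ t) :
    (b1^u1 * b2^u2 * b3^u3 * b4^u4 * b5^u5) ^ t =
      b1^(u1*t) * b2^(u2*t) * b3^(u3*t) * b4^(u4*t) * b5^(u5*t) := by
  rw [ENNReal.mul_rpow_of_nonneg _ _ ht, ENNReal.mul_rpow_of_nonneg _ _ ht,
    ENNReal.mul_rpow_of_nonneg _ _ ht, ENNReal.mul_rpow_of_nonneg _ _ ht]
  simp only [← ENNReal.rpow_mul]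

lemma prod5_mul {b1 b2 b3 b4 b5 : ℝ≥0∞}
    (h1 : b1 ≠ 0) (h1' : b1 ≠ ∞) (h2 : b2 ≠ 0) (h2' : b2 ≠ ∞)
    (h3 : b3 ≠ 0) (h3' : b3 ≠ ∞) (h4 : b4 ≠ 0) (h4' : b4 ≠ ∞)
    (h5 : b5 ≠ 0) (h5' : b5 ≠ ∞) (u1 u2 u3 u4 u5 v1 v2 v3 v4 v5 : ℝ) :
    (b1^u1 * b2^u2 * b3^u3 * b4^u4 * b5^u5) * (b1^v1 * b2^v2 * b3^v3 * b4^v4 * b5^v5) =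
      b1^(u1+v1) * b2^(u2+v2) * b3^(u3+v3) * b4^(u4+v4) * b5^(u5+v5) := by
  rw [ENNReal.rpow_add _ _ h1 h1', ENNReal.rpow_add _ _ h2 h2', ENNReal.rpow_add _ _ h3 h3',
    ENNReal.rpow_add _ _ h4 h4', ENNReal.rpow_add _ _ h5 h5']
  ring

lemma sumPartG_zero {ι : Type*} {p : ℝ≥0∞} (hp : p ≠ 0) (w : ι → ℝ≥0∞) :
    sumPartG p w (fun _ => 0) = 0 := by
  rcases eq_or_ne p ∞ with h | h
  · simp only [sumPartG, if_pos h]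
    exact le_antisymm (iSup_le fun _ => le_rfl) (zero_le)
  · have ht : 0 < p.toReal := toReal_pos2 hp h
    simp only [sumPartG, if_neg h, ENNReal.zero_rpow_of_pos ht, mul_zero, tsum_zero]
    exact ENNReal.zero_rpow_of_pos (by positivity)

lemma sumPartG_mono {ι : Type*} (p : ℝ≥0∞) (w : ι → ℝ≥0∞) {f g : ι → ℝ≥0∞}
    (h : ∀ i, f i ≤ g i) : sumPartG p w f ≤ sumPartG p w g := by
  rcases eq_or_ne p ∞ with hp | hp
  · simp only [sumPartG, if_pos hp]
    exact iSup_mono fun i => h i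
  · simp only [sumPartG, if_neg hp]
    refine ENNReal.rpow_le_rpow (ENNReal.tsum_le_tsum fun i => ?_) (by positivity)
    exact mul_le_mul_right (ENNReal.rpow_le_rpow (h i) ENNReal.toReal_nonneg) _

lemma sumPartG_smul {ι : Type*} {p : ℝ≥0∞} (hp : p ≠ 0) (w : ι → ℝ≥0∞) (c : ℝ≥0∞)
    (f : ι → ℝ≥0∞) : sumPartG p w (fun i => c * f i) = c * sumPartG p w f := by
  rcases eq_or_ne p ∞ with h | h
  · simp only [sumPartG, if_pos h]
    exact (ENNReal.mul_iSup c f).symm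
  · have ht : p.toReal ≠ 0 := (toReal_pos2 hp h).ne'
    simp only [sumPartG, if_neg h]
    have e : ∀ i, w i * (c * f i) ^ p.toReal = c ^ p.toReal * (w i * f i ^ p.toReal) := by
      intro i
      rw [ENNReal.mul_rpow_of_nonneg _ _ ENNReal.toReal_nonneg]; ring
    simp_rw [e, ENNReal.tsum_mul_left,
      ENNReal.mul_rpow_of_nonneg _ _ (by positivity : (0:ℝ) ≤ 1 / p.toReal),
      rpow_rpow_inv _ ht]

lemma le_sumPartG_one {ι : Type*} {q : ℝ≥0∞} (hq : q ≠ 0) (f : ι → ℝ≥0∞) (k : ι) :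
    f k ≤ sumPartG q (fun _ => 1) f := by
  rcases eq_or_ne q ∞ with h | h
  · simp only [sumPartG, if_pos h]; exact le_iSup f k
  · have ht : q.toReal ≠ 0 := (toReal_pos2 hq h).ne'
    simp only [sumPartG, if_neg h, one_mul]
    calc f k = ((f k) ^ q.toReal) ^ (1/q.toReal) := (rpow_rpow_inv _ ht).symm
    _ ≤ _ := ENNReal.rpow_le_rpow (ENNReal.le_tsum k) (by positivity)

lemma eq_zero_of_sumPartG_eq_zero {ι : Type*} {p : ℝ≥0∞} (hp : p ≠ 0) {w f : ι → ℝ≥0∞}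
    (hw : ∀ i, w i ≠ 0) (h : sumPartG p w f = 0) (i : ι) : f i = 0 := by
  rcases eq_or_ne p ∞ with hpt | hpt
  · simp only [sumPartG, if_pos hpt] at h
    exact le_antisymm (h ▸ le_iSup f i) (zero_le)
  · have ht : 0 < p.toReal := toReal_pos2 hp hpt
    simp only [sumPartG, if_neg hpt] at h
    rw [ENNReal.rpow_eq_zero_iff_of_pos (by positivity)] at h
    have h2 := (ENNReal.tsum_eq_zero.mp h) i
    rcases mul_eq_zero.mp h2 with h' | h'
    · exact absurd h' (hw i)
    · exact (ENNReal.rpow_eq_zero_iff_of_pos ht).mp h'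

lemma inv_facts {θ : ℝ} (hθ : 0 < θ) (hθ1 : θ < 1) {p p₀ p₁ : ℝ≥0∞}
    (hp₀ : p₀ ≠ 0) (hp₁ : p₁ ≠ 0)
    (h : p⁻¹ = ENNReal.ofReal (1-θ) * p₀⁻¹ + ENNReal.ofReal θ * p₁⁻¹) :
    p ≠ 0 ∧ (p = ∞ ↔ p₀ = ∞ ∧ p₁ = ∞) ∧
      (p ≠ ∞ → (p.toReal)⁻¹ = (1-θ) * (p₀⁻¹).toReal + θ * (p₁⁻¹).toReal) := by
  have hθ' : (0:ℝ) ≤ 1 - θ := by linarith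
  have hfin : p⁻¹ ≠ ∞ := by
    rw [h]
    exact ENNReal.add_ne_top.mpr
      ⟨ENNReal.mul_ne_top ENNReal.ofReal_ne_top (ENNReal.inv_ne_top.mpr hp₀),
       ENNReal.mul_ne_top ENNReal.ofReal_ne_top (ENNReal.inv_ne_top.mpr hp₁)⟩
  have hp0 : p ≠ 0 := by
    intro hc; rw [hc] at hfin; simp at hfin
  refine ⟨hp0, ?_, ?_⟩
  · rw [← ENNReal.inv_eq_zero, h, add_eq_zero, mul_eq_zero, mul_eq_zero]
    have h1 : ENNReal.ofReal (1-θ) ≠ 0 := by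
      simp [ENNReal.ofReal_eq_zero]; linarith
    have h2 : ENNReal.ofReal θ ≠ 0 := by
      simp [ENNReal.ofReal_eq_zero]; linarith
    simp [h1, h2, ENNReal.inv_eq_zero]
  · intro hpt
    have h3 := congrArg ENNReal.toReal h
    rw [ENNReal.toReal_add (ENNReal.mul_ne_top ENNReal.ofReal_ne_top
        (ENNReal.inv_ne_top.mpr hp₀)) (ENNReal.mul_ne_top ENNReal.ofReal_ne_top
        (ENNReal.inv_ne_top.mpr hp₁)), ENNReal.toReal_mul, ENNReal.toReal_mul,
      ENNReal.toReal_ofReal hθ', ENNReal.toReal_ofReal hθ.le, ENNReal.toReal_inv] at h3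
    exact h3

lemma tsum_holder {ι : Type*} {P Q : ℝ} (hPQ : Real.HolderConjugate P Q)
    (w f g : ι → ℝ≥0∞) :
    ∑' i, w i * (f i * g i) ≤
      (∑' i, w i * f i ^ P) ^ (1/P) * (∑' i, w i * g i ^ Q) ^ (1/Q) := by
  letI : MeasurableSpace ι := ⊤
  haveI : MeasurableSingletonClass ι := ⟨fun _ => trivial⟩
  have h := ENNReal.lintegral_mul_le_Lp_mul_Lq (Measure.count : Measure ι) hPQ
      (f := fun i => w i ^ (1/P) * f i) (g := fun i => w i ^ (1/Q) * g i)
      measurable_from_top.aemeasurable measurable_from_top.aemeasurable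
  simp only [Pi.mul_apply, MeasureTheory.lintegral_count] at h
  have e0 : ∀ i, w i ^ (1/P) * f i * (w i ^ (1/Q) * g i) = w i * (f i * g i) := by
    intro i
    have e : w i ^ (1/P) * w i ^ (1/Q) = w i := by
      rw [← ENNReal.rpow_add_of_nonneg _ _ (one_div_nonneg.mpr hPQ.nonneg)
        (one_div_nonneg.mpr hPQ.symm.nonneg),
        one_div, one_div, hPQ.inv_add_inv_eq_one, ENNReal.rpow_one]
    calc w i ^ (1/P) * f i * (w i ^ (1/Q) * g i)
        = (w i ^ (1/P) * w i ^ (1/Q)) * (f i * g i) := by ring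
      _ = w i * (f i * g i) := by rw [e]
  have eP : ∀ i, (w i ^ (1/P) * f i) ^ P = w i * f i ^ P := by
    intro i
    rw [ENNReal.mul_rpow_of_nonneg _ _ hPQ.nonneg, ← ENNReal.rpow_mul,
      one_div, inv_mul_cancel₀ hPQ.pos.ne', ENNReal.rpow_one]
  have eQ : ∀ i, (w i ^ (1/Q) * g i) ^ Q = w i * g i ^ Q := by
    intro i
    rw [ENNReal.mul_rpow_of_nonneg _ _ hPQ.symm.nonneg, ← ENNReal.rpow_mul,
      one_div, inv_mul_cancel₀ hPQ.symm.pos.ne', ENNReal.rpow_one]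
  simp only [e0, eP, eQ] at h
  exact h

lemma sumPartG_interp_aux {ι : Type*} {θ : ℝ} (hθ : 0 < θ) (hθ1 : θ < 1)
    {p p₁ : ℝ≥0∞} (hp : p ≠ 0) (hpt : p ≠ ∞) (hp₁ : p₁ ≠ 0) (hp₁t : p₁ ≠ ∞)
    (hrel : θ * p.toReal = p₁.toReal)
    (w f g : ι → ℝ≥0∞) :
    sumPartG p w (fun i => f i ^ (1-θ) * g i ^ θ) ≤
      (⨆ i, f i) ^ (1-θ) * sumPartG p₁ w g ^ θ := by
  have hptR : 0 < p.toReal := toReal_pos2 hp hpt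
  have hp₁R : 0 < p₁.toReal := toReal_pos2 hp₁ hp₁t
  simp only [sumPartG, if_neg hpt, if_neg hp₁t]
  have key : ∀ i, w i * (f i ^ (1-θ) * g i ^ θ) ^ p.toReal ≤
      (⨆ j, f j) ^ ((1-θ) * p.toReal) * (w i * g i ^ p₁.toReal) := by
    intro i
    rw [ENNReal.mul_rpow_of_nonneg _ _ hptR.le, ← ENNReal.rpow_mul, ← ENNReal.rpow_mul,
      ← hrel]
    calc w i * (f i ^ ((1-θ) * p.toReal) * g i ^ (θ * p.toReal))
        = f i ^ ((1-θ) * p.toReal) * (w i * g i ^ (θ * p.toReal)) := by ring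
      _ ≤ (⨆ j, f j) ^ ((1-θ) * p.toReal) * (w i * g i ^ (θ * p.toReal)) := by
          exact mul_le_mul_left (ENNReal.rpow_le_rpow (le_iSup f i)
            (mul_nonneg (by linarith) hptR.le)) _
  calc (∑' i, w i * (f i ^ (1-θ) * g i ^ θ) ^ p.toReal) ^ (1 / p.toReal)
      ≤ (∑' i, (⨆ j, f j) ^ ((1-θ) * p.toReal) * (w i * g i ^ p₁.toReal)) ^ (1/p.toReal) :=
        ENNReal.rpow_le_rpow (ENNReal.tsum_le_tsum key) (by positivity)
    _ = ((⨆ j, f j) ^ ((1-θ) * p.toReal) * ∑' i, w i * g i ^ p₁.toReal) ^ (1/p.toReal) := by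
        rw [ENNReal.tsum_mul_left]
    _ = (⨆ j, f j) ^ (1-θ) * ((∑' i, w i * g i ^ p₁.toReal) ^ (1/p₁.toReal)) ^ θ := by
        rw [ENNReal.mul_rpow_of_nonneg _ _ (by positivity : (0:ℝ) ≤ 1/p.toReal),
          ← ENNReal.rpow_mul, ← ENNReal.rpow_mul]
        congr 1
        · congr 1; field_simp
        · congr 1; rw [← hrel]; field_simp

lemma sumPartG_interp {ι : Type*} {θ : ℝ} (hθ : 0 < θ) (hθ1 : θ < 1)
    {p p₀ p₁ : ℝ≥0∞} (hp₀ : p₀ ≠ 0) (hp₁ : p₁ ≠ 0)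
    (h : p⁻¹ = ENNReal.ofReal (1-θ) * p₀⁻¹ + ENNReal.ofReal θ * p₁⁻¹)
    (w f g : ι → ℝ≥0∞) :
    sumPartG p w (fun i => f i ^ (1-θ) * g i ^ θ) ≤
      sumPartG p₀ w f ^ (1-θ) * sumPartG p₁ w g ^ θ := by
  obtain ⟨hp0, hiff, hreal⟩ := inv_facts hθ hθ1 hp₀ hp₁ h
  rcases eq_or_ne p₀ ∞ with h0 | h0 <;> rcases eq_or_ne p₁ ∞ with h1 | h1
  · have hp : p = ∞ := hiff.mpr ⟨h0, h1⟩
    simp only [sumPartG, if_pos hp, if_pos h0, if_pos h1]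
    exact iSup_le fun i => mul_le_mul'
      (ENNReal.rpow_le_rpow (le_iSup f i) (by linarith))
      (ENNReal.rpow_le_rpow (le_iSup g i) hθ.le)
  · have hpt : p ≠ ∞ := fun hc => h1 ((hiff.mp hc).2)
    have hre := hreal hpt
    rw [h0] at hre
    simp only [ENNReal.inv_top] at hre
    rw [show ((0:ℝ≥0∞)).toReal = 0 from rfl] at hre
    rw [ENNReal.toReal_inv] at hre
    rw [mul_zero, zero_add] at hre
    have hptR : 0 < p.toReal := toReal_pos2 hp0 hpt
    have hp₁R : 0 < p₁.toReal := toReal_pos2 hp₁ h1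
    have hrel : θ * p.toReal = p₁.toReal := by
      field_simp at hre
      nlinarith [hre]
    have := sumPartG_interp_aux hθ hθ1 hp0 hpt hp₁ h1 hrel w f g
    simpa only [sumPartG, if_pos h0] using this
  · have hpt : p ≠ ∞ := fun hc => h0 ((hiff.mp hc).1)
    have hre := hreal hpt
    rw [h1] at hre
    simp only [ENNReal.inv_top] at hre
    rw [show ((0:ℝ≥0∞)).toReal = 0 from rfl] at hre
    rw [ENNReal.toReal_inv] at hre
    rw [mul_zero, add_zero] at hre
    have hptR : 0 < p.toReal := toReal_pos2 hp0 hpt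
    have hp₀R : 0 < p₀.toReal := toReal_pos2 hp₀ h0
    have hθ1' : 0 < 1 - θ := by linarith
    have hrel : (1-θ) * p.toReal = p₀.toReal := by
      field_simp at hre
      nlinarith [hre]
    have key := sumPartG_interp_aux hθ1' (by linarith : 1 - θ < 1) hp0 hpt hp₀ h0 hrel w g f
    have e : 1 - (1-θ) = θ := by ring
    rw [e] at key
    have e2 : (fun i => g i ^ θ * f i ^ (1-θ)) = (fun i => f i ^ (1-θ) * g i ^ θ) := by
      funext i; ring
    rw [e2] at key
    have hsup : sumPartG p₁ w g = ⨆ i, g i := by simp only [sumPartG, if_pos h1]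
    rw [hsup]
    calc sumPartG p w (fun i => f i ^ (1-θ) * g i ^ θ)
        ≤ (⨆ i, g i) ^ θ * sumPartG p₀ w f ^ (1-θ) := key
      _ = sumPartG p₀ w f ^ (1-θ) * (⨆ i, g i) ^ θ := mul_comm _ _
  · have hpt : p ≠ ∞ := fun hc => h0 ((hiff.mp hc).1)
    have hre := hreal hpt
    rw [ENNReal.toReal_inv, ENNReal.toReal_inv] at hre
    have hptR : 0 < p.toReal := toReal_pos2 hp0 hpt
    have hp₀R : 0 < p₀.toReal := toReal_pos2 hp₀ h0
    have hp₁R : 0 < p₁.toReal := toReal_pos2 hp₁ h1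
    have hθ1' : 0 < 1 - θ := by linarith
    set P : ℝ := p₀.toReal / ((1-θ) * p.toReal) with hP
    set Q : ℝ := p₁.toReal / (θ * p.toReal) with hQ
    have hPpos : 0 < P := by positivity
    have hQpos : 0 < Q := by positivity
    have hre2 : p₀.toReal * p₁.toReal =
        ((1-θ) * p₁.toReal + θ * p₀.toReal) * p.toReal := by
      field_simp at hre
      linarith [hre]
    have hconj : Real.HolderConjugate P Q := by
      rw [Real.holderConjugate_iff]
      constructor
      · rw [hP, lt_div_iff₀ (by positivity), one_mul]
        nlinarith [mul_pos (mul_pos hθ hp₀R) hptR]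
      · rw [hP, hQ]
        field_simp
        nlinarith [hre2]
    have expand : ∀ i, w i * (f i ^ (1-θ) * g i ^ θ) ^ p.toReal =
        w i * (f i ^ ((1-θ) * p.toReal) * g i ^ (θ * p.toReal)) := by
      intro i
      rw [ENNReal.mul_rpow_of_nonneg _ _ hptR.le, ← ENNReal.rpow_mul, ← ENNReal.rpow_mul]
    have hPe : (1-θ) * p.toReal * P = p₀.toReal := by
      rw [hP]; field_simp
    have hQe : θ * p.toReal * Q = p₁.toReal := by
      rw [hQ]; field_simp
    have holder := tsum_holder hconj w (fun i => f i ^ ((1-θ) * p.toReal))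
      (fun i => g i ^ (θ * p.toReal))
    simp only [← ENNReal.rpow_mul, hPe, hQe] at holder
    simp only [sumPartG, if_neg hpt, if_neg h0, if_neg h1]
    calc (∑' i, w i * (f i ^ (1-θ) * g i ^ θ) ^ p.toReal) ^ (1/p.toReal)
        ≤ ((∑' i, w i * f i ^ p₀.toReal) ^ (1/P) *
            (∑' i, w i * g i ^ p₁.toReal) ^ (1/Q)) ^ (1/p.toReal) := by
          refine ENNReal.rpow_le_rpow ?_ (by positivity)
          simp only [expand]
          exact holder
      _ = ((∑' i, w i * f i ^ p₀.toReal) ^ (1/p₀.toReal)) ^ (1-θ) *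
            ((∑' i, w i * g i ^ p₁.toReal) ^ (1/p₁.toReal)) ^ θ := by
          rw [ENNReal.mul_rpow_of_nonneg _ _ (by positivity : (0:ℝ) ≤ 1/p.toReal),
            ← ENNReal.rpow_mul, ← ENNReal.rpow_mul, ← ENNReal.rpow_mul,
            ← ENNReal.rpow_mul]
          congr 1
          · congr 1
            rw [hP]; field_simp
          · congr 1
            rw [hQ]; field_simp

end S18
namespace S18
lemma exists_factorization {Z X : Type*} [MetricSpace Z] [MeasurableSpace Z]
    (μ : Measure Z) (ξ : X → Z) (lvl : X → ℤ)
    (hw0 : ∀ x : X, μ (vBall ξ lvl x) ≠ 0) (hwt : ∀ x : X, μ (vBall ξ lvl x) ≠ ∞)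
    {θ : ℝ} (hθ : 0 < θ) (hθ1 : θ < 1)
    (s₀ s₁ s : ℝ) (p₀ q₀ p₁ q₁ p q : ℝ≥0∞)
    (hp₀ : p₀ ≠ 0) (hq₀ : q₀ ≠ 0) (hp₁ : p₁ ≠ 0) (hq₁ : q₁ ≠ 0)
    (hsθ : s = (1 - θ) * s₀ + θ * s₁)
    (hpθ : p⁻¹ = ENNReal.ofReal (1 - θ) * p₀⁻¹ + ENNReal.ofReal θ * p₁⁻¹)
    (hqθ : q⁻¹ = ENNReal.ofReal (1 - θ) * q₀⁻¹ + ENNReal.ofReal θ * q₁⁻¹)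
    (g : X → ℝ≥0∞) (hgt : ∀ x, g x ≠ ∞)
    (hN0 : seqNorm μ ξ lvl s p q g ≠ 0) (hNt : seqNorm μ ξ lvl s p q g ≠ ∞) :
    ∃ g₀ g₁ : X → ℝ≥0∞, (∀ x, g₀ x ≠ ∞) ∧ (∀ x, g₁ x ≠ ∞) ∧
      seqNorm μ ξ lvl s₀ p₀ q₀ g₀ ≤ 1 ∧ seqNorm μ ξ lvl s₁ p₁ q₁ g₁ ≤ 1 ∧
      ∀ x, g x ≤ seqNorm μ ξ lvl s p q g * g₀ x ^ (1 - θ) * g₁ x ^ θ := by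
  obtain ⟨hp, hpiff, hpreal⟩ := inv_facts hθ hθ1 hp₀ hp₁ hpθ
  obtain ⟨hq, hqiff, hqreal⟩ := inv_facts hθ hθ1 hq₀ hq₁ hqθ
  set N : ℝ≥0∞ := seqNorm μ ξ lvl s p q g with hNdef
  set A : ℤ → ℝ≥0∞ := fun k =>
    sumPartG p (fun x : {x : X // lvl x = k} => μ (vBall ξ lvl x.1)) (fun x => g x.1)
    with hA
  set ah : ℤ → ℝ≥0∞ := fun k => (2:ℝ≥0∞) ^ ((k:ℝ) * s) * A k * N⁻¹ with hah
  have hseq : ∀ (s'' : ℝ) (p'' q'' : ℝ≥0∞) (h : X → ℝ≥0∞),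
      seqNorm μ ξ lvl s'' p'' q'' h =
        sumPartG q'' (fun _ : ℤ => 1) (fun k => (2:ℝ≥0∞) ^ ((k:ℝ) * s'') *
          sumPartG p'' (fun x : {x : X // lvl x = k} => μ (vBall ξ lvl x.1))
            (fun x => h x.1)) := fun _ _ _ _ => rfl
  have hNis : N = sumPartG q (fun _ : ℤ => 1)
      (fun k => (2:ℝ≥0∞) ^ ((k:ℝ) * s) * A k) := hseq s p q g
  have hNinv0 : N⁻¹ ≠ 0 := ENNReal.inv_ne_zero.mpr hNt
  have hNinvt : N⁻¹ ≠ ∞ := ENNReal.inv_ne_top.mpr hN0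
  have haABle : ∀ k : ℤ, (2:ℝ≥0∞) ^ ((k:ℝ) * s) * A k ≤ N := by
    intro k; rw [hNis]; exact le_sumPartG_one hq _ k
  have hAt : ∀ k, A k ≠ ∞ := by
    intro k hc
    apply hNt
    have h1 := haABle k
    rw [hc, ENNReal.mul_top (two_rpow_ne_zero _)] at h1
    exact top_le_iff.mp h1
  have haht1 : ∀ k, ah k ≤ 1 := by
    intro k
    calc ah k ≤ N * N⁻¹ := mul_le_mul_left (haABle k) _
      _ = 1 := ENNReal.mul_inv_cancel hN0 hNt
  have haht : ∀ k, ah k ≠ ∞ := fun k => ne_top_of_le_ne_top one_ne_top (haht1 k)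
  have hah0 : ∀ k, A k ≠ 0 → ah k ≠ 0 := fun k hk =>
    mul_ne_zero (mul_ne_zero (two_rpow_ne_zero _) hk) hNinv0
  have hgz : ∀ x : X, A (lvl x) = 0 → g x = 0 := by
    intro x hx
    have hx' : sumPartG p (fun y : {y : X // lvl y = lvl x} => μ (vBall ξ lvl y.1))
        (fun y => g y.1) = 0 := hx
    exact eq_zero_of_sumPartG_eq_zero hp (fun i : {y : X // lvl y = lvl x} => hw0 i.1) hx' ⟨x, rfl⟩
  set G : ℝ → ℝ → ℝ → X → ℝ≥0∞ := fun s' α β x =>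
    g x ^ α * A (lvl x) ^ (1 - α) * N⁻¹ *
      (2:ℝ≥0∞) ^ ((lvl x : ℝ) * (s - s')) * ah (lvl x) ^ (β - 1) with hG
  have key : ∀ (s' : ℝ) (p' q' : ℝ≥0∞) (α β : ℝ),
      p' ≠ 0 → q' ≠ 0 →
      ((p = ∞ ∧ p' = ∞ ∧ α = 1) ∨ (p ≠ ∞ ∧ p' = ∞ ∧ α = 0) ∨
        (p ≠ ∞ ∧ p' ≠ ∞ ∧ α = p.toReal * (p'⁻¹).toReal)) →
      ((q = ∞ ∧ q' = ∞ ∧ β = 1) ∨ (q ≠ ∞ ∧ q' = ∞ ∧ β = 0) ∨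
        (q ≠ ∞ ∧ q' ≠ ∞ ∧ β = q.toReal * (q'⁻¹).toReal)) →
      (∀ x, G s' α β x ≠ ∞) ∧ seqNorm μ ξ lvl s' p' q' (G s' α β) ≤ 1 := by
    intro s' p' q' α β hp' hq' Hα Hβ
    have hαpos : α = 0 ∨ 0 < α := by
      rcases Hα with ⟨_,_,h⟩|⟨_,_,h⟩|⟨hpt',hp't,h⟩
      · right; rw [h]; norm_num
      · left; exact h
      · right; rw [h]
        exact mul_pos (toReal_pos2 hp hpt')
          (toReal_pos2 (ENNReal.inv_ne_zero.mpr hp't) (ENNReal.inv_ne_top.mpr hp'))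
    have hGzero : ∀ x, A (lvl x) = 0 → G s' α β x = 0 := by
      intro x hx
      rcases hαpos with h | h
      · simp only [hG, hx, h, sub_zero, ENNReal.rpow_one, mul_zero, zero_mul]
      · have hzz : g x ^ α = 0 := by
          rw [hgz x hx]; exact ENNReal.zero_rpow_of_pos h
        simp only [hG, hzz, zero_mul]
    have hGt : ∀ x, G s' α β x ≠ ∞ := by
      intro x
      rcases eq_or_ne (A (lvl x)) 0 with h | h
      · rw [hGzero x h]; exact ENNReal.zero_ne_top
      · have f1 : g x ^ α ≠ ∞ := by
          rcases hαpos with h' | h'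
          · rw [h']; simp
          · exact ENNReal.rpow_ne_top_of_nonneg h'.le (hgt x)
        exact ENNReal.mul_ne_top (ENNReal.mul_ne_top (ENNReal.mul_ne_top
          (ENNReal.mul_ne_top f1 (rpow_ne_top'' h (hAt _) _)) hNinvt)
          (two_rpow_ne_top _)) (rpow_ne_top'' (hah0 _ h) (haht _) _)
    have inner : ∀ k : ℤ, (2:ℝ≥0∞) ^ ((k:ℝ) * s') *
        sumPartG p' (fun x : {x : X // lvl x = k} => μ (vBall ξ lvl x.1))
          (fun x => G s' α β x.1) ≤ ah k ^ β := by
      intro k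
      rcases eq_or_ne (A k) 0 with hAk | hAk
      · have hzz : (fun x : {x : X // lvl x = k} => G s' α β x.1) =
            (fun _ => 0) := by
          funext x
          exact hGzero x.1 (by rw [x.2]; exact hAk)
        rw [hzz, sumPartG_zero hp', mul_zero]
        exact zero_le
      · have hah0' := hah0 k hAk
        set C : ℝ≥0∞ := A k ^ (1 - α) * N⁻¹ *
          (2:ℝ≥0∞) ^ ((k : ℝ) * (s - s')) * ah k ^ (β - 1) with hC
        have hrestr : (fun x : {x : X // lvl x = k} => G s' α β x.1) =
            fun x => C * g x.1 ^ α := by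
          funext x
          simp only [hG, hC, x.2]
          ring
        rw [hrestr, sumPartG_smul hp' _ C]
        have hmain : sumPartG p'
            (fun x : {x : X // lvl x = k} => μ (vBall ξ lvl x.1))
            (fun x => g x.1 ^ α) ≤ A k ^ α := by
          rcases Hα with ⟨hpi,hp'i,hα⟩|⟨hpi,hp'i,hα⟩|⟨hpi,hp'i,hα⟩
          · subst hα
            simp only [sumPartG, if_pos hp'i, ENNReal.rpow_one]
            rw [hA]
            simp only [sumPartG, if_pos hpi]
            exact le_rfl
          · subst hα
            simp only [sumPartG, if_pos hp'i, ENNReal.rpow_zero]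
            exact iSup_le fun _ => le_rfl
          · have hps : 0 < p.toReal := toReal_pos2 hp hpi
            have hp's : 0 < p'.toReal := toReal_pos2 hp' hp'i
            have hα' : α * p'.toReal = p.toReal := by
              rw [hα, ENNReal.toReal_inv]
              field_simp
            simp only [sumPartG, if_neg hp'i]
            have e1 : ∀ x : {x : X // lvl x = k},
                μ (vBall ξ lvl x.1) * (g x.1 ^ α) ^ p'.toReal =
                  μ (vBall ξ lvl x.1) * g x.1 ^ p.toReal := by
              intro x; rw [← ENNReal.rpow_mul, hα']
            rw [tsum_congr e1]
            have hsum : (∑' x : {x : X // lvl x = k},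
                μ (vBall ξ lvl x.1) * g x.1 ^ p.toReal) = A k ^ p.toReal := by
              rw [hA]
              simp only [sumPartG, if_neg hpi]
              exact (rpow_inv_rpow _ hps.ne').symm
            rw [hsum, ← ENNReal.rpow_mul,
              show p.toReal * (1/p'.toReal) = α from by rw [hα, ENNReal.toReal_inv]; field_simp]
        calc (2:ℝ≥0∞) ^ ((k:ℝ) * s') * (C * sumPartG p'
              (fun x : {x : X // lvl x = k} => μ (vBall ξ lvl x.1)) (fun x => g x.1 ^ α))
            ≤ (2:ℝ≥0∞) ^ ((k:ℝ) * s') * (C * A k ^ α) :=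
              mul_le_mul_right (mul_le_mul_right hmain C) _
          _ = ah k ^ β := by
              rw [hC]
              have e1 : A k ^ (1-α) * A k ^ α = A k := by
                rw [← ENNReal.rpow_add _ _ hAk (hAt k),
                  show (1-α) + α = (1:ℝ) from by ring, ENNReal.rpow_one]
              have e2 : (2:ℝ≥0∞) ^ ((k:ℝ) * s') * (2:ℝ≥0∞) ^ ((k:ℝ)*(s - s')) =
                  (2:ℝ≥0∞) ^ ((k:ℝ) * s) := by
                rw [← two_rpow_add]; congr 1; ring
              have e3 : ah k * ah k ^ (β-1) = ah k ^ β := by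
                nth_rewrite 1 [← ENNReal.rpow_one (ah k)]
                rw [← ENNReal.rpow_add _ _ hah0' (haht k),
                  show (1:ℝ) + (β-1) = β from by ring]
              calc (2:ℝ≥0∞) ^ ((k:ℝ) * s') *
                    (A k ^ (1-α) * N⁻¹ * (2:ℝ≥0∞) ^ ((k:ℝ)*(s-s')) * ah k ^ (β-1) * A k ^ α)
                  = ((2:ℝ≥0∞)^((k:ℝ)*s') * (2:ℝ≥0∞)^((k:ℝ)*(s-s'))) *
                    (A k ^ (1-α) * A k ^ α) * N⁻¹ * ah k ^ (β-1) := by ring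
                _ = ((2:ℝ≥0∞)^((k:ℝ)*s) * A k * N⁻¹) * ah k ^ (β-1) := by
                    rw [e1, e2]
                _ = ah k * ah k ^ (β - 1) := by rw [hah]
                _ = ah k ^ β := e3
    refine ⟨hGt, ?_⟩
    rw [hseq s' p' q' (G s' α β)]
    refine le_trans (sumPartG_mono q' _ inner) ?_
    rcases Hβ with ⟨hqi,hq'i,hβ⟩|⟨hqi,hq'i,hβ⟩|⟨hqi,hq'i,hβ⟩
    · subst hβ
      simp only [sumPartG, if_pos hq'i]
      exact iSup_le fun k => ENNReal.rpow_le_one (haht1 k) (by norm_num)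
    · subst hβ
      simp only [sumPartG, if_pos hq'i]
      exact iSup_le fun k => ENNReal.rpow_le_one (haht1 k) le_rfl
    · have hqs : 0 < q.toReal := toReal_pos2 hq hqi
      have hq's : 0 < q'.toReal := toReal_pos2 hq' hq'i
      have hβ' : β * q'.toReal = q.toReal := by
        rw [hβ, ENNReal.toReal_inv]; field_simp
      simp only [sumPartG, if_neg hq'i, one_mul]
      have e : ∀ k : ℤ, (ah k ^ β) ^ q'.toReal = ah k ^ q.toReal := by
        intro k; rw [← ENNReal.rpow_mul, hβ']
      rw [tsum_congr e]
      have hsum : (∑' k : ℤ, ah k ^ q.toReal) = 1 := by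
        have e2 : ∀ k : ℤ, ah k ^ q.toReal =
            ((2:ℝ≥0∞) ^ ((k:ℝ)*s) * A k) ^ q.toReal * (N⁻¹) ^ q.toReal := by
          intro k
          rw [hah, ENNReal.mul_rpow_of_nonneg _ _ hqs.le]
        rw [tsum_congr e2, ENNReal.tsum_mul_right]
        have hNsum : (∑' k : ℤ, ((2:ℝ≥0∞) ^ ((k:ℝ)*s) * A k) ^ q.toReal) =
            N ^ q.toReal := by
          rw [hNis]
          simp only [sumPartG, if_neg hqi, one_mul]
          exact (rpow_inv_rpow _ hqs.ne').symm
        rw [hNsum, ← ENNReal.mul_rpow_of_nonneg _ _ hqs.le,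
          ENNReal.mul_inv_cancel hN0 hNt, ENNReal.one_rpow]
      rw [hsum, ENNReal.one_rpow]
  -- the exponents
  set α₀ : ℝ := if p = ∞ then 1 else p.toReal * (p₀⁻¹).toReal with hα₀
  set α₁ : ℝ := if p = ∞ then 1 else p.toReal * (p₁⁻¹).toReal with hα₁
  set β₀ : ℝ := if q = ∞ then 1 else q.toReal * (q₀⁻¹).toReal with hβ₀
  set β₁ : ℝ := if q = ∞ then 1 else q.toReal * (q₁⁻¹).toReal with hβ₁
  have Hαgen : ∀ (pi : ℝ≥0∞), pi ≠ 0 → (p = ∞ → pi = ∞) →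
      ((p = ∞ ∧ pi = ∞ ∧ (if p = ∞ then (1:ℝ) else p.toReal * (pi⁻¹).toReal) = 1) ∨
       (p ≠ ∞ ∧ pi = ∞ ∧ (if p = ∞ then (1:ℝ) else p.toReal * (pi⁻¹).toReal) = 0) ∨
       (p ≠ ∞ ∧ pi ≠ ∞ ∧ (if p = ∞ then (1:ℝ) else p.toReal * (pi⁻¹).toReal) =
          p.toReal * (pi⁻¹).toReal)) := by
    intro pi hpi himp
    rcases eq_or_ne p ∞ with h | h
    · exact Or.inl ⟨h, himp h, if_pos h⟩
    · rcases eq_or_ne pi ∞ with h0 | h0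
      · refine Or.inr (Or.inl ⟨h, h0, ?_⟩)
        rw [if_neg h, h0]
        simp
      · exact Or.inr (Or.inr ⟨h, h0, if_neg h⟩)
  have Hβgen : ∀ (qi : ℝ≥0∞), qi ≠ 0 → (q = ∞ → qi = ∞) →
      ((q = ∞ ∧ qi = ∞ ∧ (if q = ∞ then (1:ℝ) else q.toReal * (qi⁻¹).toReal) = 1) ∨
       (q ≠ ∞ ∧ qi = ∞ ∧ (if q = ∞ then (1:ℝ) else q.toReal * (qi⁻¹).toReal) = 0) ∨
       (q ≠ ∞ ∧ qi ≠ ∞ ∧ (if q = ∞ then (1:ℝ) else q.toReal * (qi⁻¹).toReal) =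
          q.toReal * (qi⁻¹).toReal)) := by
    intro qi hqi himp
    rcases eq_or_ne q ∞ with h | h
    · exact Or.inl ⟨h, himp h, if_pos h⟩
    · rcases eq_or_ne qi ∞ with h0 | h0
      · refine Or.inr (Or.inl ⟨h, h0, ?_⟩)
        rw [if_neg h, h0]
        simp
      · exact Or.inr (Or.inr ⟨h, h0, if_neg h⟩)
  obtain ⟨hG₀t, hG₀n⟩ := key s₀ p₀ q₀ α₀ β₀ hp₀ hq₀
    (Hαgen p₀ hp₀ (fun h => (hpiff.mp h).1)) (Hβgen q₀ hq₀ (fun h => (hqiff.mp h).1))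
  obtain ⟨hG₁t, hG₁n⟩ := key s₁ p₁ q₁ α₁ β₁ hp₁ hq₁
    (Hαgen p₁ hp₁ (fun h => (hpiff.mp h).2)) (Hβgen q₁ hq₁ (fun h => (hqiff.mp h).2))
  have hsumα : (1-θ) * α₀ + θ * α₁ = 1 := by
    rcases eq_or_ne p ∞ with h | h
    · rw [hα₀, hα₁, if_pos h, if_pos h]; ring
    · have hre := hpreal h
      have hpt : p.toReal ≠ 0 := (toReal_pos2 hp h).ne'
      have h2 : p.toReal * (p.toReal)⁻¹ = 1 := mul_inv_cancel₀ hpt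
      rw [hα₀, hα₁, if_neg h, if_neg h]
      linear_combination (-p.toReal) * hre + h2
  have hsumβ : (1-θ) * β₀ + θ * β₁ = 1 := by
    rcases eq_or_ne q ∞ with h | h
    · rw [hβ₀, hβ₁, if_pos h, if_pos h]; ring
    · have hre := hqreal h
      have hqt : q.toReal ≠ 0 := (toReal_pos2 hq h).ne'
      have h2 : q.toReal * (q.toReal)⁻¹ = 1 := mul_inv_cancel₀ hqt
      rw [hβ₀, hβ₁, if_neg h, if_neg h]
      linear_combination (-q.toReal) * hre + h2
  refine ⟨G s₀ α₀ β₀, G s₁ α₁ β₁, hG₀t, hG₁t, hG₀n, hG₁n, ?_⟩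
  intro x
  rcases eq_or_ne (g x) 0 with hx | hx
  · rw [hx]; exact zero_le
  · have hAx : A (lvl x) ≠ 0 := fun hc => hx (hgz x hc)
    have hahx : ah (lvl x) ≠ 0 := hah0 _ hAx
    have main : G s₀ α₀ β₀ x ^ (1-θ) * G s₁ α₁ β₁ x ^ θ = g x * N⁻¹ := by
      have hrepr : ∀ (s' α β : ℝ), G s' α β x =
          g x ^ α * A (lvl x) ^ (1-α) * (N⁻¹) ^ (1:ℝ) *
            (2:ℝ≥0∞) ^ (((lvl x):ℝ)*(s-s')) * ah (lvl x) ^ (β-1) := by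
        intro s' α β
        rw [hG, ENNReal.rpow_one]
      rw [hrepr s₀ α₀ β₀, hrepr s₁ α₁ β₁,
        prod5_pow _ _ _ _ _ _ _ _ _ _ (by linarith : (0:ℝ) ≤ 1-θ),
        prod5_pow _ _ _ _ _ _ _ _ _ _ hθ.le,
        prod5_mul hx (hgt x) hAx (hAt _) hNinv0 hNinvt
          (by norm_num : (2:ℝ≥0∞) ≠ 0) (by simp : (2:ℝ≥0∞) ≠ ∞)
          hahx (haht _),
        show α₀*(1-θ) + α₁*θ = 1 from by linear_combination hsumα,
        show (1-α₀)*(1-θ) + (1-α₁)*θ = 0 from by linear_combination -hsumα,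
        show (1:ℝ)*(1-θ) + 1*θ = 1 from by ring,
        show ((lvl x:ℝ)*(s-s₀))*(1-θ) + ((lvl x:ℝ)*(s-s₁))*θ = 0 from by
          linear_combination ((lvl x:ℝ)) * hsθ,
        show (β₀-1)*(1-θ) + (β₁-1)*θ = 0 from by linear_combination hsumβ]
      simp [ENNReal.rpow_one, ENNReal.rpow_zero]
    apply le_of_eq
    calc g x = N * (g x * N⁻¹) := by
          rw [mul_comm (g x) N⁻¹, ← mul_assoc, ENNReal.mul_inv_cancel hN0 hNt, one_mul]
      _ = N * (G s₀ α₀ β₀ x ^ (1-θ) * G s₁ α₁ β₁ x ^ θ) := by rw [main]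
      _ = N * G s₀ α₀ β₀ x ^ (1-θ) * G s₁ α₁ β₁ x ^ θ := (mul_assoc _ _ _).symm

end S18

namespace S18

lemma seqNorm_mono {Z X : Type*} [MetricSpace Z] [MeasurableSpace Z] (μ : Measure Z)
    (ξ : X → Z) (lvl : X → ℤ) (s : ℝ) (p q : ℝ≥0∞) {f g : X → ℝ≥0∞}
    (h : ∀ x, f x ≤ g x) : seqNorm μ ξ lvl s p q f ≤ seqNorm μ ξ lvl s p q g := by
  simp only [seqNorm]
  refine sumPartG_mono q _ fun k => mul_le_mul_right (sumPartG_mono p _ ?_) _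
  exact fun (x : {x : X // lvl x = k}) => h x.1

lemma seqNorm_smul {Z X : Type*} [MetricSpace Z] [MeasurableSpace Z] (μ : Measure Z)
    (ξ : X → Z) (lvl : X → ℤ) (s : ℝ) {p q : ℝ≥0∞} (hp : p ≠ 0) (hq : q ≠ 0)
    (c : ℝ≥0∞) (f : X → ℝ≥0∞) :
    seqNorm μ ξ lvl s p q (fun x => c * f x) = c * seqNorm μ ξ lvl s p q f := by
  simp only [seqNorm]
  have e : (fun k : ℤ => (2:ℝ≥0∞) ^ ((k:ℝ) * s) *
      sumPartG p (fun x : {x : X // lvl x = k} => μ (vBall ξ lvl x.1))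
        (fun x => c * f x.1)) =
      fun k : ℤ => c * ((2:ℝ≥0∞) ^ ((k:ℝ) * s) *
        sumPartG p (fun x : {x : X // lvl x = k} => μ (vBall ξ lvl x.1))
          (fun x => f x.1)) := by
    funext k
    rw [sumPartG_smul hp]
    ring
  rw [e, sumPartG_smul hq]

lemma seqNorm_eq_zero {Z X : Type*} [MetricSpace Z] [MeasurableSpace Z] (μ : Measure Z)
    (ξ : X → Z) (lvl : X → ℤ) (s : ℝ) {p q : ℝ≥0∞} (hp : p ≠ 0) (hq : q ≠ 0)
    {f : X → ℝ≥0∞} (hf : ∀ x, f x = 0) : seqNorm μ ξ lvl s p q f = 0 := by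
  simp only [seqNorm]
  have e : (fun k : ℤ => (2:ℝ≥0∞) ^ ((k:ℝ) * s) *
      sumPartG p (fun x : {x : X // lvl x = k} => μ (vBall ξ lvl x.1))
        (fun x => f x.1)) = fun _ : ℤ => 0 := by
    funext k
    have e2 : (fun x : {x : X // lvl x = k} => f x.1) = fun _ => 0 :=
      funext fun x => hf x.1
    rw [e2, sumPartG_zero hp, mul_zero]
  rw [e, sumPartG_zero hq]

lemma seqNorm_interp {Z X : Type*} [MetricSpace Z] [MeasurableSpace Z] (μ : Measure Z)
    (ξ : X → Z) (lvl : X → ℤ) {θ : ℝ} (hθ : 0 < θ) (hθ1 : θ < 1)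
    {s₀ s₁ s : ℝ} {p₀ q₀ p₁ q₁ p q : ℝ≥0∞}
    (hp₀ : p₀ ≠ 0) (hq₀ : q₀ ≠ 0) (hp₁ : p₁ ≠ 0) (hq₁ : q₁ ≠ 0)
    (hsθ : s = (1 - θ) * s₀ + θ * s₁)
    (hpθ : p⁻¹ = ENNReal.ofReal (1 - θ) * p₀⁻¹ + ENNReal.ofReal θ * p₁⁻¹)
    (hqθ : q⁻¹ = ENNReal.ofReal (1 - θ) * q₀⁻¹ + ENNReal.ofReal θ * q₁⁻¹)
    (f g : X → ℝ≥0∞) :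
    seqNorm μ ξ lvl s p q (fun x => f x ^ (1-θ) * g x ^ θ) ≤
      seqNorm μ ξ lvl s₀ p₀ q₀ f ^ (1-θ) * seqNorm μ ξ lvl s₁ p₁ q₁ g ^ θ := by
  simp only [seqNorm]
  refine le_trans (sumPartG_mono q _ (fun k => ?_))
    (sumPartG_interp hθ hθ1 hq₀ hq₁ hqθ _ _ _)
  have h1 := sumPartG_interp hθ hθ1 hp₀ hp₁ hpθ
    (fun x : {x : X // lvl x = k} => μ (vBall ξ lvl x.1))
    (fun x => f x.1) (fun x => g x.1)
  have h2 : (2:ℝ≥0∞) ^ ((k:ℝ)*s) =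
      ((2:ℝ≥0∞) ^ ((k:ℝ)*s₀)) ^ (1-θ) * ((2:ℝ≥0∞) ^ ((k:ℝ)*s₁)) ^ θ := by
    rw [← ENNReal.rpow_mul, ← ENNReal.rpow_mul, ← two_rpow_add]
    congr 1
    rw [hsθ]; ring
  calc (2:ℝ≥0∞) ^ ((k:ℝ)*s) * sumPartG p
        (fun x : {x : X // lvl x = k} => μ (vBall ξ lvl x.1))
        (fun x => f x.1 ^ (1-θ) * g x.1 ^ θ)
      ≤ (2:ℝ≥0∞) ^ ((k:ℝ)*s) * (sumPartG p₀
          (fun x : {x : X // lvl x = k} => μ (vBall ξ lvl x.1)) (fun x => f x.1) ^ (1-θ) *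
        sumPartG p₁
          (fun x : {x : X // lvl x = k} => μ (vBall ξ lvl x.1)) (fun x => g x.1) ^ θ) :=
        mul_le_mul_right h1 _
    _ = _ := by
        rw [h2, ENNReal.mul_rpow_of_nonneg _ _ (by linarith : (0:ℝ) ≤ 1-θ),
          ENNReal.mul_rpow_of_nonneg _ _ hθ.le]
        ring

end S18
/-- the Calderón product of `I^{s₀}_{p₀,q₀}(X)` and `I^{s₁}_{p₁,q₁}(X)` is
`I^s_{p,q}(X)` with the interpolated parameters, with equivalent quasinorms. -/
theorem statement18 {Z : Type*} [MetricSpace Z] [MeasurableSpace Z] [BorelSpace Z]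
    (μ : Measure Z)
    (hpos : ∀ (ζ : Z) (r : ℝ), 0 < r → 0 < μ (Metric.ball ζ r))
    (hfin : ∀ (ζ : Z) (r : ℝ), μ (Metric.ball ζ r) < ∞)
    {X : Type*} (ξ : X → Z) (lvl : X → ℤ)
    (hsep : ∀ x y : X, x ≠ y → lvl x = lvl y → (2:ℝ) ^ (-lvl x - 1) ≤ dist (ξ x) (ξ y))
    (hmax : ∀ (n : ℤ) (z : Z), ∃ x : X, lvl x = n ∧ dist z (ξ x) < (2:ℝ) ^ (-n - 1))
    (s₀ s₁ : ℝ) (hs₀ : 0 < s₀) (hs₁ : 0 < s₁)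
    (p₀ q₀ p₁ q₁ : ℝ≥0∞) (hp₀ : 0 < p₀) (hq₀ : 0 < q₀) (hp₁ : 0 < p₁) (hq₁ : 0 < q₁)
    (θ : ℝ) (hθ : 0 < θ) (hθ1 : θ < 1)
    (s : ℝ) (p q : ℝ≥0∞)
    (hsθ : s = (1 - θ) * s₀ + θ * s₁)
    (hpθ : p⁻¹ = ENNReal.ofReal (1 - θ) * p₀⁻¹ + ENNReal.ofReal θ * p₁⁻¹)
    (hqθ : q⁻¹ = ENNReal.ofReal (1 - θ) * q₀⁻¹ + ENNReal.ofReal θ * q₁⁻¹) :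
    ∃ Cb : ℝ≥0∞, 1 ≤ Cb ∧ Cb ≠ ∞ ∧ ∀ u : X → ℂ,
      seqNorm μ ξ lvl s p q (fun x => (‖u x‖₊ : ℝ≥0∞)) ≤
        Cb * calderonNorm μ ξ lvl s₀ p₀ q₀ s₁ p₁ q₁ θ u ∧
      calderonNorm μ ξ lvl s₀ p₀ q₀ s₁ p₁ q₁ θ u ≤
        Cb * seqNorm μ ξ lvl s p q (fun x => (‖u x‖₊ : ℝ≥0∞)) := by
  have hwpos : ∀ x : X, μ (vBall ξ lvl x) ≠ 0 := fun x =>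
    (hpos (ξ x) _ (by positivity)).ne'
  have hwfin : ∀ x : X, μ (vBall ξ lvl x) ≠ ∞ := fun x => (hfin _ _).ne
  obtain ⟨hp, hpiff, hpreal⟩ := S18.inv_facts hθ hθ1 hp₀.ne' hp₁.ne' hpθ
  obtain ⟨hq, hqiff, hqreal⟩ := S18.inv_facts hθ hθ1 hq₀.ne' hq₁.ne' hqθ
  refine ⟨1, le_rfl, ENNReal.one_ne_top, fun u => ?_⟩
  constructor
  · -- seqNorm ≤ calderonNorm
    rw [one_mul]
    simp only [calderonNorm]
    refine le_iInf fun lam => ?_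
    obtain ⟨u₀, u₁, h₀, h₁, hptw⟩ := lam.2
    calc seqNorm μ ξ lvl s p q (fun x => (‖u x‖₊ : ℝ≥0∞))
        ≤ seqNorm μ ξ lvl s p q (fun x => lam.1 *
            ((‖u₀ x‖₊ : ℝ≥0∞) ^ (1-θ) * (‖u₁ x‖₊ : ℝ≥0∞) ^ θ)) :=
          S18.seqNorm_mono μ ξ lvl s p q
            (fun x => (hptw x).trans (le_of_eq (mul_assoc _ _ _)))
      _ = lam.1 * seqNorm μ ξ lvl s p q
            (fun x => (‖u₀ x‖₊ : ℝ≥0∞) ^ (1-θ) * (‖u₁ x‖₊ : ℝ≥0∞) ^ θ) :=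
          S18.seqNorm_smul μ ξ lvl s hp hq _ _
      _ ≤ lam.1 * (seqNorm μ ξ lvl s₀ p₀ q₀ (fun x => (‖u₀ x‖₊ : ℝ≥0∞)) ^ (1-θ) *
            seqNorm μ ξ lvl s₁ p₁ q₁ (fun x => (‖u₁ x‖₊ : ℝ≥0∞)) ^ θ) :=
          mul_le_mul_right (S18.seqNorm_interp μ ξ lvl hθ hθ1 hp₀.ne' hq₀.ne'
            hp₁.ne' hq₁.ne' hsθ hpθ hqθ _ _) _
      _ ≤ lam.1 * (1 * 1) :=
          mul_le_mul_right (mul_le_mul'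
            (ENNReal.rpow_le_one h₀ (by linarith)) (ENNReal.rpow_le_one h₁ hθ.le)) _
      _ = lam.1 := by rw [one_mul, mul_one]
  · -- calderonNorm ≤ seqNorm
    rw [one_mul]
    rcases eq_or_ne (seqNorm μ ξ lvl s p q (fun x => (‖u x‖₊ : ℝ≥0∞))) ∞ with hN | hN
    · rw [hN]; exact le_top
    rcases eq_or_ne (seqNorm μ ξ lvl s p q (fun x => (‖u x‖₊ : ℝ≥0∞))) 0 with hN0 | hN0
    · -- u vanishes
      have hux : ∀ x : X, (‖u x‖₊ : ℝ≥0∞) = 0 := by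
        intro x
        have hle := S18.le_sumPartG_one hq (fun k : ℤ => (2:ℝ≥0∞) ^ ((k:ℝ) * s) *
          sumPartG p (fun y : {y : X // lvl y = k} => μ (vBall ξ lvl y.1))
            (fun y => (‖u y.1‖₊ : ℝ≥0∞))) (lvl x)
        have hrfl : seqNorm μ ξ lvl s p q (fun x => (‖u x‖₊ : ℝ≥0∞)) =
            sumPartG q (fun _ : ℤ => 1) (fun k : ℤ => (2:ℝ≥0∞) ^ ((k:ℝ) * s) *
              sumPartG p (fun y : {y : X // lvl y = k} => μ (vBall ξ lvl y.1))
                (fun y => (‖u y.1‖₊ : ℝ≥0∞))) := rfl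
        rw [← hrfl, hN0] at hle
        have h1 := le_antisymm hle (zero_le)
        rcases mul_eq_zero.mp h1 with h' | h'
        · exact absurd h' (S18.two_rpow_ne_zero _)
        · exact S18.eq_zero_of_sumPartG_eq_zero hp
            (fun i : {y : X // lvl y = lvl x} => hwpos i.1) h' ⟨x, rfl⟩
      refine le_trans (iInf_le _ ⟨0, (fun _ => 0), (fun _ => 0), ?_, ?_, ?_⟩) (zero_le)
      · rw [S18.seqNorm_eq_zero μ ξ lvl s₀ hp₀.ne' hq₀.ne' (fun x => by simp)]
        exact zero_le_one
      · rw [S18.seqNorm_eq_zero μ ξ lvl s₁ hp₁.ne' hq₁.ne' (fun x => by simp)]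
        exact zero_le_one
      · intro x
        rw [hux x]
        exact zero_le
    · obtain ⟨g₀, g₁, hg₀t, hg₁t, hn₀, hn₁, hptw⟩ :=
        S18.exists_factorization μ ξ lvl hwpos hwfin hθ hθ1 s₀ s₁ s p₀ q₀ p₁ q₁ p q
          hp₀.ne' hq₀.ne' hp₁.ne' hq₁.ne' hsθ hpθ hqθ
          (fun x => (‖u x‖₊ : ℝ≥0∞)) (fun x => ENNReal.coe_ne_top) hN0 hN
      have hcoe : ∀ (r : ℝ≥0∞), r ≠ ∞ → (‖((r.toReal : ℝ) : ℂ)‖₊ : ℝ≥0∞) = r := by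
        intro r hr
        rw [Complex.nnnorm_real, ← enorm_eq_nnnorm, Real.enorm_eq_ofReal ENNReal.toReal_nonneg,
          ENNReal.ofReal_toReal hr]
      have he₀ : (fun x => (‖(((g₀ x).toReal : ℝ) : ℂ)‖₊ : ℝ≥0∞)) = g₀ :=
        funext fun x => hcoe _ (hg₀t x)
      have he₁ : (fun x => (‖(((g₁ x).toReal : ℝ) : ℂ)‖₊ : ℝ≥0∞)) = g₁ :=
        funext fun x => hcoe _ (hg₁t x)
      refine le_trans (iInf_le _ ⟨seqNorm μ ξ lvl s p q (fun x => (‖u x‖₊ : ℝ≥0∞)),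
        (fun x => (((g₀ x).toReal : ℝ) : ℂ)), (fun x => (((g₁ x).toReal : ℝ) : ℂ)),
        ?_, ?_, ?_⟩) le_rfl
      · rw [he₀]; exact hn₀
      · rw [he₁]; exact hn₁
      · intro x
        rw [show (‖(((g₀ x).toReal : ℝ) : ℂ)‖₊ : ℝ≥0∞) = g₀ x from congrFun he₀ x,
          show (‖(((g₁ x).toReal : ℝ) : ℂ)‖₊ : ℝ≥0∞) = g₁ x from congrFun he₁ x]
        exact hptw x
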